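/- arXiv:1111.7205 — 3 statements merged into one kernel-verified Lean document; each statement's English description precedes it below -/
import Mathlib

section
/- Let {Y_t}_{t∈ℤ} be a strictly stationary process whose marginal distribution function F is continuous and strictly increasing on ℝ, and assume Σ_{k∈ℤ} |γ_k(x_1,x_2)| < ∞ for all (x_1,x_2) ∈ ℝ². Then the following three statements are equivalent: (1) for every k ∈ ℤ, the joint law of (Y_0, Y_k) equals the joint law of (Y_0, Y_{−k}) (time-reversibility); (2) Im f_{x_1,x_2}(ω) = 0 for all ω ∈ ℝ and all (x_1,x_2) ∈ ℝ²; (3) Im f_{q_{τ_1},q_{τ_2}}(ω) = 0 for all ω ∈ ℝ and all (τ_1,τ_2) ∈ (0,1)². -/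
open MeasureTheory ProbabilityTheory Filter Topology

noncomputable section

namespace DHKV

variable {Ω : Type} [MeasurableSpace Ω]

/-- Indicator of the event `{Z ≤ x}`, as a real-valued function. -/
def ind (Z : Ω → ℝ) (x : ℝ) : Ω → ℝ := fun ωo => if Z ωo ≤ x then 1 else 0

/-- Covariance of two real random variables. -/
def cov (P : Measure Ω) (f g : Ω → ℝ) : ℝ :=
  (∫ ωo, f ωo * g ωo ∂P) - (∫ ωo, f ωo ∂P) * (∫ ωo, g ωo ∂P)

/-- Strict stationarity of a process indexed by `ℤ`. -/
def StrictlyStationary (P : Measure Ω) (Y : ℤ → Ω → ℝ) : Prop :=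
  ∀ (k : ℤ) (m : ℕ) (t : Fin m → ℤ),
    P.map (fun ωo (i : Fin m) => Y (t i + k) ωo)
      = P.map (fun ωo (i : Fin m) => Y (t i) ωo)

/-- The (marginal) distribution function of a real random variable. -/
def cdf' (P : Measure Ω) (Z : Ω → ℝ) : ℝ → ℝ := fun x => (P {ωo | Z ωo ≤ x}).toReal

/-- Generalized inverse (quantile function) of a distribution function. -/
def quantile (F : ℝ → ℝ) (τ : ℝ) : ℝ := sInf {x : ℝ | τ ≤ F x}

/-- Laplace cross-covariance kernel of lag `k`. -/
def laplaceCov (P : Measure Ω) (Y : ℤ → Ω → ℝ) (k : ℤ) (x₁ x₂ : ℝ) : ℝ :=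
  cov P (ind (Y k) x₁) (ind (Y 0) x₂)

/-- Laplace spectral density kernel. -/
def laplaceSpec (P : Measure Ω) (Y : ℤ → Ω → ℝ) (x₁ x₂ ω : ℝ) : ℂ :=
  (1 / (2 * (Real.pi : ℂ))) *
    ∑' k : ℤ, (laplaceCov P Y k x₁ x₂ : ℂ) * Complex.exp (-(Complex.I) * (k : ℂ) * (ω : ℂ))

/-- Copula cross-covariance kernel of lag `k`. -/
def copulaCov (P : Measure Ω) (Y : ℤ → Ω → ℝ) (k : ℤ) (τ₁ τ₂ : ℝ) : ℝ :=
  cov P (ind (fun ωo => cdf' P (Y 0) (Y k ωo)) τ₁)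
        (ind (fun ωo => cdf' P (Y 0) (Y 0 ωo)) τ₂)

/-- Copula spectral density kernel. -/
def copulaSpec (P : Measure Ω) (Y : ℤ → Ω → ℝ) (τ₁ τ₂ ω : ℝ) : ℂ :=
  (1 / (2 * (Real.pi : ℂ))) *
    ∑' k : ℤ, (copulaCov P Y k τ₁ τ₂ : ℂ) * Complex.exp (-(Complex.I) * (k : ℂ) * (ω : ℂ))

end DHKV

open DHKV

section AuxLemmas

open Set

variable {Ω : Type} [MeasurableSpace Ω]

lemma aux_ind_eq (Z : Ω → ℝ) (x : ℝ) :
    ind Z x = Set.indicator {ωo | Z ωo ≤ x} (fun _ => (1:ℝ)) := by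
  funext ω
  by_cases h : Z ω ≤ x <;> simp [ind, Set.indicator_apply, h]

lemma aux_ind_mul (Z W : Ω → ℝ) (x y : ℝ) :
    (fun ωo => ind Z x ωo * ind W y ωo)
      = Set.indicator ({ωo | Z ωo ≤ x} ∩ {ωo | W ωo ≤ y}) (fun _ => (1:ℝ)) := by
  funext ω
  by_cases h1 : Z ω ≤ x <;> by_cases h2 : W ω ≤ y <;>
    simp [ind, Set.indicator_apply, h1, h2]

lemma aux_integral_ind (P : Measure Ω) {Z : Ω → ℝ} (hZ : Measurable Z) (x : ℝ) :
    ∫ ωo, ind Z x ωo ∂P = (P {ωo | Z ωo ≤ x}).toReal := by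
  have hs : MeasurableSet {ωo | Z ωo ≤ x} := hZ measurableSet_Iic
  rw [aux_ind_eq, integral_indicator_const (1:ℝ) hs, smul_eq_mul, mul_one]
  rfl

lemma aux_integral_ind_mul (P : Measure Ω) {Z W : Ω → ℝ} (hZ : Measurable Z)
    (hW : Measurable W) (x y : ℝ) :
    ∫ ωo, ind Z x ωo * ind W y ωo ∂P
      = (P ({ωo | Z ωo ≤ x} ∩ {ωo | W ωo ≤ y})).toReal := by
  have h : ∀ ωo, ind Z x ωo * ind W y ωo
      = Set.indicator ({ωo | Z ωo ≤ x} ∩ {ωo | W ωo ≤ y}) (fun _ => (1:ℝ)) ωo :=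
    fun ω => congrFun (aux_ind_mul Z W x y) ω
  have hs : MeasurableSet ({ωo | Z ωo ≤ x} ∩ {ωo | W ωo ≤ y}) :=
    (hZ measurableSet_Iic).inter (hW measurableSet_Iic)
  simp only [h]
  rw [integral_indicator_const (1:ℝ) hs, smul_eq_mul, mul_one]
  rfl

lemma aux_laplaceCov_eq (P : Measure Ω) (Y : ℤ → Ω → ℝ) (hY : ∀ t, Measurable (Y t))
    (k : ℤ) (x₁ x₂ : ℝ) :
    laplaceCov P Y k x₁ x₂
      = (P ({ωo | Y k ωo ≤ x₁} ∩ {ωo | Y 0 ωo ≤ x₂})).toReal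
        - (P {ωo | Y k ωo ≤ x₁}).toReal * (P {ωo | Y 0 ωo ≤ x₂}).toReal := by
  unfold laplaceCov cov
  rw [aux_integral_ind_mul P (hY k) (hY 0), aux_integral_ind P (hY k),
    aux_integral_ind P (hY 0)]

lemma aux_map_single (P : Measure Ω) (Y : ℤ → Ω → ℝ) (hY : ∀ t, Measurable (Y t))
    (hstat : StrictlyStationary P Y) (k : ℤ) :
    P.map (Y k) = P.map (Y 0) := by
  have h := hstat k 1 (fun _ => 0)
  have hev : Measurable (fun v : Fin 1 → ℝ => v 0) := measurable_pi_apply 0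
  have h1 : Measurable (fun ωo (_ : Fin 1) => Y ((0:ℤ) + k) ωo) :=
    measurable_pi_lambda _ (fun _ => hY _)
  have h2 : Measurable (fun ωo (_ : Fin 1) => Y (0:ℤ) ωo) :=
    measurable_pi_lambda _ (fun _ => hY _)
  have e1 : P.map (Y k)
      = (P.map (fun ωo (_ : Fin 1) => Y ((0:ℤ) + k) ωo)).map (fun v => v 0) := by
    rw [Measure.map_map hev h1]
    simp [Function.comp_def, zero_add]
  have e2 : P.map (Y 0)
      = (P.map (fun ωo (_ : Fin 1) => Y (0:ℤ) ωo)).map (fun v => v 0) := by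
    rw [Measure.map_map hev h2]
    rfl
  rw [e1, e2]
  exact congrArg (Measure.map (fun v : Fin 1 → ℝ => v 0)) (by simpa using h)

lemma aux_measure_le (P : Measure Ω) (Y : ℤ → Ω → ℝ) (hY : ∀ t, Measurable (Y t))
    (hstat : StrictlyStationary P Y) (k : ℤ) (x : ℝ) :
    P {ωo | Y k ωo ≤ x} = P {ωo | Y 0 ωo ≤ x} := by
  have h1 : P.map (Y k) (Iic x) = P.map (Y 0) (Iic x) := by
    rw [aux_map_single P Y hY hstat k]
  rwa [Measure.map_apply (hY k) measurableSet_Iic,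
    Measure.map_apply (hY 0) measurableSet_Iic] at h1

lemma aux_joint_apply (P : Measure Ω) (Y : ℤ → Ω → ℝ) (hY : ∀ t, Measurable (Y t))
    (k : ℤ) (x₁ x₂ : ℝ) :
    P.map (fun ωo => (Y 0 ωo, Y k ωo)) (Iic x₂ ×ˢ Iic x₁)
      = P ({ωo | Y k ωo ≤ x₁} ∩ {ωo | Y 0 ωo ≤ x₂}) := by
  rw [Measure.map_apply ((hY 0).prodMk (hY k)) (measurableSet_Iic.prod measurableSet_Iic)]
  congr 1
  ext ω
  simp only [Set.mem_preimage, Set.mem_prod, Set.mem_Iic, Set.mem_inter_iff, Set.mem_setOf_eq]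
  exact and_comm

lemma aux_lawEq_iff (P : Measure Ω) [IsProbabilityMeasure P] (Y : ℤ → Ω → ℝ)
    (hY : ∀ t, Measurable (Y t)) (hstat : StrictlyStationary P Y) (k : ℤ) :
    (P.map (fun ωo => (Y 0 ωo, Y k ωo)) = P.map (fun ωo => (Y 0 ωo, Y (-k) ωo)))
      ↔ ∀ x₁ x₂ : ℝ, laplaceCov P Y k x₁ x₂ = laplaceCov P Y (-k) x₁ x₂ := by
  constructor
  · intro h x₁ x₂
    rw [aux_laplaceCov_eq P Y hY, aux_laplaceCov_eq P Y hY,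
      ← aux_joint_apply P Y hY k x₁ x₂, ← aux_joint_apply P Y hY (-k) x₁ x₂, h,
      aux_measure_le P Y hY hstat k x₁, aux_measure_le P Y hY hstat (-k) x₁]
  · intro h
    set C : Set (Set (ℝ × ℝ)) :=
      Set.image2 (· ×ˢ ·) (Set.range (Iic : ℝ → Set ℝ)) (Set.range (Iic : ℝ → Set ℝ)) with hC_def
    have hspan : IsCountablySpanning (Set.range (Iic : ℝ → Set ℝ)) := by
      refine ⟨fun n => Iic (n : ℝ), fun n => ⟨n, rfl⟩, ?_⟩
      ext x
      simp only [Set.mem_iUnion, Set.mem_Iic, Set.mem_univ, iff_true]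
      exact exists_nat_ge x
    have hR : (inferInstance : MeasurableSpace ℝ)
        = MeasurableSpace.generateFrom (Set.range (Iic : ℝ → Set ℝ)) := by
      rw [BorelSpace.measurable_eq (α := ℝ)]
      exact borel_eq_generateFrom_Iic ℝ
    have hgen : (inferInstance : MeasurableSpace (ℝ × ℝ))
        = MeasurableSpace.generateFrom C := by
      calc (inferInstance : MeasurableSpace (ℝ × ℝ))
          = @Prod.instMeasurableSpace ℝ ℝ
              (MeasurableSpace.generateFrom (Set.range (Iic : ℝ → Set ℝ)))
              (MeasurableSpace.generateFrom (Set.range (Iic : ℝ → Set ℝ))) := by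
            rw [← hR]
        _ = MeasurableSpace.generateFrom C := generateFrom_prod_eq hspan hspan
    have hpi : IsPiSystem C := by
      rintro _ ⟨_, ⟨a, rfl⟩, _, ⟨b, rfl⟩, rfl⟩ _ ⟨_, ⟨c, rfl⟩, _, ⟨d, rfl⟩, rfl⟩ -
      exact ⟨Iic (min a c), ⟨min a c, rfl⟩, Iic (min b d), ⟨min b d, rfl⟩,
        by rw [Set.prod_inter_prod, Set.Iic_inter_Iic, Set.Iic_inter_Iic]⟩
    haveI hP1 : IsProbabilityMeasure (P.map (fun ωo => (Y 0 ωo, Y k ωo))) :=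
      Measure.isProbabilityMeasure_map ((hY 0).prodMk (hY k)).aemeasurable
    haveI hP2 : IsProbabilityMeasure (P.map (fun ωo => (Y 0 ωo, Y (-k) ωo))) :=
      Measure.isProbabilityMeasure_map ((hY 0).prodMk (hY (-k))).aemeasurable
    refine MeasureTheory.ext_of_generate_finite C hgen hpi ?_ ?_
    · rintro _ ⟨_, ⟨a, rfl⟩, _, ⟨b, rfl⟩, rfl⟩
      rw [aux_joint_apply P Y hY k b a, aux_joint_apply P Y hY (-k) b a]
      have hcov := h b a
      rw [aux_laplaceCov_eq P Y hY, aux_laplaceCov_eq P Y hY,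
        aux_measure_le P Y hY hstat k b, aux_measure_le P Y hY hstat (-k) b] at hcov
      have heq : (P ({ωo | Y k ωo ≤ b} ∩ {ωo | Y 0 ωo ≤ a})).toReal
          = (P ({ωo | Y (-k) ωo ≤ b} ∩ {ωo | Y 0 ωo ≤ a})).toReal := by linarith
      exact (ENNReal.toReal_eq_toReal_iff' (measure_ne_top P _) (measure_ne_top P _)).mp heq
    · simp [measure_univ]

end AuxLemmas

section SpecLemmas

open Set Complex
open scoped ENNReal NNReal

lemma aux_norm_term (c : ℤ → ℝ) (k : ℤ) (ω : ℝ) :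
    ‖(c k : ℂ) * Complex.exp (-(Complex.I) * (k : ℂ) * (ω : ℂ))‖ = |c k| := by
  have hre : (-(Complex.I) * (k : ℂ) * (ω : ℂ)).re = 0 := by simp
  rw [norm_mul, Complex.norm_exp, hre, Real.exp_zero,
    mul_one, Complex.norm_real, Real.norm_eq_abs]

lemma aux_summable_term (c : ℤ → ℝ) (hc : Summable fun k => |c k|) (ω : ℝ) :
    Summable fun k : ℤ => (c k : ℂ) * Complex.exp (-(Complex.I) * (k:ℂ) * (ω:ℂ)) := by
  apply Summable.of_norm
  simpa only [aux_norm_term] using hc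

lemma aux_term_im (c : ℤ → ℝ) (k : ℤ) (ω : ℝ) :
    ((c k : ℂ) * Complex.exp (-(Complex.I) * (k:ℂ) * (ω:ℂ))).im
      = -(c k * Real.sin ((k : ℝ) * ω)) := by
  have h : -(Complex.I) * (k:ℂ) * (ω:ℂ) = ((-((k : ℝ) * ω) : ℝ) : ℂ) * Complex.I := by
    push_cast; ring
  rw [h, Complex.mul_im, Complex.exp_ofReal_mul_I_im]
  simp [Real.sin_neg]

lemma aux_tsum_im (c : ℤ → ℝ) (hc : Summable fun k => |c k|) (ω : ℝ) :
    (∑' k : ℤ, (c k : ℂ) * Complex.exp (-(Complex.I) * (k:ℂ) * (ω:ℂ))).im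
      = ∑' k : ℤ, -(c k * Real.sin ((k : ℝ) * ω)) := by
  rw [← Complex.imCLM_apply, ContinuousLinearMap.map_tsum _ (aux_summable_term c hc ω)]
  simp only [Complex.imCLM_apply, aux_term_im]

lemma aux_dir1 (c : ℤ → ℝ) (hc : Summable fun k => |c k|) (hsym : ∀ k, c k = c (-k)) (ω : ℝ) :
    (∑' k : ℤ, (c k : ℂ) * Complex.exp (-(Complex.I)*(k:ℂ)*(ω:ℂ))).im = 0 := by
  rw [aux_tsum_im c hc ω]
  set g : ℤ → ℝ := fun k => c k * Real.sin ((k : ℝ) * ω) with hg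
  have h1 : ∑' k : ℤ, -g k = ∑' k : ℤ, -g (-k) :=
    ((Equiv.neg ℤ).tsum_eq (fun k => -g k)).symm
  have h2 : ∀ k : ℤ, -g (-k) = g k := by
    intro k
    simp only [hg]
    rw [← hsym k]
    push_cast
    rw [neg_mul, Real.sin_neg]
    ring
  have h3 : ∑' k : ℤ, -g k = ∑' k : ℤ, g k := by
    rw [h1]; exact tsum_congr h2
  have h4 : ∑' k : ℤ, -g k = -∑' k : ℤ, g k := tsum_neg
  have : ∑' k : ℤ, -g k = 0 := by
    have := h3.symm.trans h4
    linarith [this]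
  exact this

lemma aux_dir2 (c : ℤ → ℝ) (hc : Summable fun k => |c k|)
    (h : ∀ ω : ℝ, (∑' k : ℤ, (c k : ℂ) * Complex.exp (-(Complex.I)*(k:ℂ)*(ω:ℂ))).im = 0)
    (m : ℤ) : c m = c (-m) := by
  set a : ℤ → ℝ := fun k => c k - c (-k) with ha_def
  have hcneg : Summable (fun k : ℤ => |c (-k)|) := by
    have := (Equiv.neg ℤ).summable_iff (f := fun k : ℤ => |c k|)
    exact this.mpr hc
  have ha : Summable fun k => |a k| := by
    refine Summable.of_nonneg_of_le (fun k => abs_nonneg _) (fun k => ?_) (hc.add hcneg)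
    exact abs_sub _ _
  -- the "odd part" sums to zero pointwise
  have hzero : ∀ ω : ℝ, ∑' k : ℤ, (a k : ℂ) * Complex.exp (-(Complex.I)*(k:ℂ)*(ω:ℂ)) = 0 := by
    intro ω
    have hs1 := aux_summable_term c hc ω
    have hs2 := aux_summable_term (fun k => c (-k)) hcneg ω
    set T := ∑' k : ℤ, (c k:ℂ) * Complex.exp (-(Complex.I)*(k:ℂ)*(ω:ℂ)) with hT_def
    have hstar : (starRingEnd ℂ) T = ∑' k : ℤ, (c k:ℂ) * Complex.exp ((Complex.I)*(k:ℂ)*(ω:ℂ)) := by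
      have hse : (starRingEnd ℂ) T = star T := rfl
      rw [hse, hT_def, tsum_star]
      apply tsum_congr
      intro k
      simp only [star_mul', Complex.star_def, ← Complex.exp_conj, map_mul, map_neg,
        Complex.conj_I, Complex.conj_ofReal, map_intCast]
      ring_nf
    have hreindex : ∑' k : ℤ, (c k:ℂ) * Complex.exp ((Complex.I)*(k:ℂ)*(ω:ℂ))
        = ∑' k : ℤ, (c (-k):ℂ) * Complex.exp (-(Complex.I)*(k:ℂ)*(ω:ℂ)) := by
      rw [← (Equiv.neg ℤ).tsum_eq (fun k : ℤ => (c k:ℂ) * Complex.exp (Complex.I*(k:ℂ)*(ω:ℂ)))]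
      apply tsum_congr
      intro k
      simp only [Equiv.neg_apply]
      congr 1
      push_cast
      ring
    have hrealT : (starRingEnd ℂ) T = T := Complex.conj_eq_iff_im.mpr (h ω)
    have hkey : ∑' k : ℤ, (c (-k):ℂ) * Complex.exp (-(Complex.I)*(k:ℂ)*(ω:ℂ)) = T := by
      rw [← hreindex, ← hstar, hrealT]
    have hsplit : ∀ k : ℤ, (a k : ℂ) * Complex.exp (-(Complex.I)*(k:ℂ)*(ω:ℂ))
        = (c k:ℂ) * Complex.exp (-(Complex.I)*(k:ℂ)*(ω:ℂ))
          - (c (-k):ℂ) * Complex.exp (-(Complex.I)*(k:ℂ)*(ω:ℂ)) := by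
      intro k; simp only [ha_def]; push_cast; ring
    calc ∑' k : ℤ, (a k : ℂ) * Complex.exp (-(Complex.I)*(k:ℂ)*(ω:ℂ))
        = ∑' k : ℤ, ((c k:ℂ) * Complex.exp (-(Complex.I)*(k:ℂ)*(ω:ℂ))
            - (c (-k):ℂ) * Complex.exp (-(Complex.I)*(k:ℂ)*(ω:ℂ))) := tsum_congr hsplit
      _ = T - ∑' k : ℤ, (c (-k):ℂ) * Complex.exp (-(Complex.I)*(k:ℂ)*(ω:ℂ)) :=
          Summable.tsum_sub hs1 hs2
      _ = 0 := by rw [hkey, sub_self]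
  -- integrate against exp(I m ω) over (0, 2π]
  have h2pi : (0:ℝ) < 2 * Real.pi := by positivity
  have key : ∀ k : ℤ, (∫ ω in Set.Ioc (0:ℝ) (2*Real.pi),
      Complex.exp (-(Complex.I)*(k:ℂ)*(ω:ℂ)) * Complex.exp (Complex.I*(m:ℂ)*(ω:ℂ)))
      = if k = m then ((2*Real.pi : ℝ) : ℂ) else 0 := by
    intro k
    have hcomb : ∀ ω : ℝ, Complex.exp (-(Complex.I)*(k:ℂ)*(ω:ℂ)) * Complex.exp (Complex.I*(m:ℂ)*(ω:ℂ))
        = Complex.exp ((Complex.I * ((m - k : ℤ) : ℂ)) * (ω:ℂ)) := by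
      intro ω; rw [← Complex.exp_add]; congr 1; push_cast; ring
    simp only [hcomb]
    rw [← intervalIntegral.integral_of_le h2pi.le]
    by_cases hkm : k = m
    · subst hkm
      simp only [sub_self, Int.cast_zero, mul_zero, zero_mul, Complex.exp_zero, if_pos rfl]
      rw [intervalIntegral.integral_const]
      simp [Complex.real_smul]
    · have hn : ((m - k : ℤ) : ℂ) ≠ 0 := by
        exact_mod_cast sub_ne_zero.mpr (Ne.symm hkm)
      have hcne : Complex.I * ((m - k : ℤ) : ℂ) ≠ 0 := mul_ne_zero Complex.I_ne_zero hn
      rw [integral_exp_mul_complex hcne]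
      have he : Complex.exp (Complex.I * ((m - k : ℤ):ℂ) * ((2*Real.pi : ℝ):ℂ)) = 1 := by
        rw [← Complex.exp_int_mul_two_pi_mul_I (m - k)]
        congr 1
        push_cast
        ring
      rw [if_neg hkm, he]
      simp
  set f : ℤ → ℝ → ℂ := fun k ω =>
    (a k:ℂ) * Complex.exp (-(Complex.I)*(k:ℂ)*(ω:ℂ)) * Complex.exp (Complex.I*(m:ℂ)*(ω:ℂ)) with hf_def
  set μ : Measure ℝ := volume.restrict (Set.Ioc (0:ℝ) (2*Real.pi)) with hμ_def
  have hmeas : ∀ k : ℤ, AEStronglyMeasurable (f k) μ := by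
    intro k
    apply Continuous.aestronglyMeasurable
    fun_prop
  have hnormf : ∀ k (ω : ℝ), ‖f k ω‖ = |a k| := by
    intro k ω
    rw [hf_def]
    simp only
    rw [norm_mul, aux_norm_term a k ω, Complex.norm_exp]
    simp
  have hsummable_nn : Summable fun k : ℤ => ‖a k‖₊ := by
    rw [← NNReal.summable_coe]
    simpa only [coe_nnnorm, Real.norm_eq_abs] using ha
  have hfin : (∑' k : ℤ, ∫⁻ ω, ‖f k ω‖₊ ∂μ) ≠ ⊤ := by
    have hconst : ∀ k : ℤ, (∫⁻ ω, ‖f k ω‖₊ ∂μ) = (‖a k‖₊ : ℝ≥0∞) * ENNReal.ofReal (2*Real.pi) := by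
      intro k
      have : ∀ ω, (‖f k ω‖₊ : ℝ≥0∞) = (‖a k‖₊ : ℝ≥0∞) := by
        intro ω
        congr 1
        ext
        rw [coe_nnnorm, coe_nnnorm, hnormf k ω, Real.norm_eq_abs]
      simp only [this]
      rw [lintegral_const, hμ_def, Measure.restrict_apply_univ, Real.volume_Ioc, sub_zero]
    simp only [hconst]
    rw [ENNReal.tsum_mul_right]
    exact ENNReal.mul_ne_top (ENNReal.tsum_coe_ne_top_iff_summable.mpr hsummable_nn)
      ENNReal.ofReal_ne_top
  have hint := MeasureTheory.integral_tsum hmeas hfin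
  have hLHS : (∫ ω, (∑' k : ℤ, f k ω) ∂μ) = 0 := by
    have : ∀ ω : ℝ, (∑' k : ℤ, f k ω) = 0 := by
      intro ω
      rw [hf_def]
      simp only
      rw [tsum_mul_right, hzero ω, zero_mul]
    simp only [this, integral_zero]
  have hRHS : (∑' k : ℤ, ∫ ω, f k ω ∂μ) = (a m : ℂ) * ((2*Real.pi : ℝ) : ℂ) := by
    have hterm : ∀ k : ℤ, (∫ ω, f k ω ∂μ) = (a k : ℂ) * (if k = m then ((2*Real.pi : ℝ) : ℂ) else 0) := by
      intro k
      have hfk : ∀ ω : ℝ, f k ω = (a k:ℂ) *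
          (Complex.exp (-(Complex.I)*(k:ℂ)*(ω:ℂ)) * Complex.exp (Complex.I*(m:ℂ)*(ω:ℂ))) := by
        intro ω; rw [hf_def]; ring
      simp only [hfk]
      rw [MeasureTheory.integral_const_mul, key k]
    simp only [hterm]
    rw [tsum_eq_single m (fun k hk => by simp [hk])]
    simp
  have : (a m : ℂ) * ((2*Real.pi : ℝ) : ℂ) = 0 := by
    rw [← hRHS, ← hint, hLHS]
  have h2 : ((2*Real.pi : ℝ) : ℂ) ≠ 0 := by
    exact_mod_cast h2pi.ne'
  have ham : (a m : ℂ) = 0 := by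
    rcases mul_eq_zero.mp this with h' | h'
    · exact h'
    · exact absurd h' h2
  have : a m = 0 := by exact_mod_cast ham
  have := sub_eq_zero.mp this
  exact this

end SpecLemmas

section ConnLemmas

open Set

variable {Ω : Type} [MeasurableSpace Ω]

lemma aux_spec_im_eq (P : Measure Ω) (Y : ℤ → Ω → ℝ) (x₁ x₂ ω : ℝ) :
    (laplaceSpec P Y x₁ x₂ ω).im = (1 / (2 * Real.pi)) *
      (∑' k : ℤ, ((laplaceCov P Y k x₁ x₂ : ℝ) : ℂ)
        * Complex.exp (-(Complex.I)*(k:ℂ)*(ω:ℂ))).im := by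
  unfold laplaceSpec
  rw [show (1 / (2 * (Real.pi:ℂ))) = (((1 / (2*Real.pi) : ℝ)):ℂ) by push_cast; ring]
  rw [Complex.mul_im]
  simp

lemma aux_spec_im_zero_iff (P : Measure Ω) (Y : ℤ → Ω → ℝ) (x₁ x₂ ω : ℝ) :
    (laplaceSpec P Y x₁ x₂ ω).im = 0 ↔
      (∑' k : ℤ, ((laplaceCov P Y k x₁ x₂ : ℝ):ℂ)
        * Complex.exp (-(Complex.I)*(k:ℂ)*(ω:ℂ))).im = 0 := by
  rw [aux_spec_im_eq]
  constructor
  · intro h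
    have hne : (1 / (2*Real.pi)) ≠ 0 := by positivity
    exact (mul_eq_zero.mp h).resolve_left hne
  · intro h; rw [h, mul_zero]

lemma aux_F_lt_one (P : Measure Ω) [IsProbabilityMeasure P] {Z : Ω → ℝ}
    (hmono : StrictMono (cdf' P Z)) (x : ℝ) : cdf' P Z x < 1 := by
  have h1 : cdf' P Z (x+1) ≤ 1 := by
    unfold cdf'
    calc (P {ωo | Z ωo ≤ x + 1}).toReal ≤ (1:ENNReal).toReal :=
      ENNReal.toReal_mono ENNReal.one_ne_top prob_le_one
    _ = 1 := by simp
  exact lt_of_lt_of_le (hmono (lt_add_one x)) h1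

lemma aux_F_pos (P : Measure Ω) {Z : Ω → ℝ}
    (hmono : StrictMono (cdf' P Z)) (x : ℝ) : 0 < cdf' P Z x := by
  have h0 : (0:ℝ) ≤ cdf' P Z (x-1) := ENNReal.toReal_nonneg
  have := hmono (show x - 1 < x by linarith)
  linarith

lemma aux_F_mem_Ioo (P : Measure Ω) [IsProbabilityMeasure P] {Z : Ω → ℝ}
    (hmono : StrictMono (cdf' P Z)) (x : ℝ) : cdf' P Z x ∈ Set.Ioo (0:ℝ) 1 :=
  ⟨aux_F_pos P hmono x, aux_F_lt_one P hmono x⟩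

lemma aux_exists_F_eq (P : Measure Ω) [IsProbabilityMeasure P] {Z : Ω → ℝ}
    (hZ : Measurable Z) (hcont : Continuous (cdf' P Z)) {τ : ℝ}
    (hτ : τ ∈ Set.Ioo (0:ℝ) 1) :
    ∃ x : ℝ, cdf' P Z x = τ := by
  have hmonoset : Monotone (fun n : ℕ => {ωo | Z ωo ≤ (n:ℝ)}) := by
    intro n m hnm ω hω
    simp only [Set.mem_setOf_eq] at hω ⊢
    exact le_trans hω (by exact_mod_cast hnm)
  have hunion : (⋃ n : ℕ, {ωo | Z ωo ≤ (n:ℝ)}) = Set.univ := by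
    ext ω
    simp only [Set.mem_iUnion, Set.mem_setOf_eq, Set.mem_univ, iff_true]
    exact exists_nat_ge (Z ω)
  have htop : Tendsto (fun n : ℕ => cdf' P Z (n:ℝ)) atTop (𝓝 1) := by
    have h1 := tendsto_measure_iUnion_atTop (μ := P) hmonoset
    rw [hunion, measure_univ] at h1
    have h2 := (ENNReal.tendsto_toReal ENNReal.one_ne_top).comp h1
    simpa [cdf', Function.comp_def] using h2
  have hbot : Tendsto (fun n : ℕ => cdf' P Z (-(n:ℝ))) atTop (𝓝 0) := by
    have hanti : Antitone (fun n : ℕ => {ωo | Z ωo ≤ -(n:ℝ)}) := by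
      intro n m hnm ω hω
      simp only [Set.mem_setOf_eq] at hω ⊢
      refine le_trans hω (neg_le_neg ?_)
      exact_mod_cast hnm
    have hinter : (⋂ n : ℕ, {ωo | Z ωo ≤ -(n:ℝ)}) = ∅ := by
      ext ω
      simp only [Set.mem_iInter, Set.mem_setOf_eq, Set.mem_empty_iff_false, iff_false,
        not_forall]
      obtain ⟨n, hn⟩ := exists_nat_gt (-(Z ω))
      refine ⟨n, ?_⟩
      push_neg
      linarith
    have h1 := tendsto_measure_iInter_atTop (μ := P)
      (s := fun n : ℕ => {ωo | Z ωo ≤ -(n:ℝ)})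
      (fun n => (show MeasurableSet {ωo | Z ωo ≤ -(n:ℝ)} from
        hZ measurableSet_Iic).nullMeasurableSet) hanti ⟨0, measure_ne_top P _⟩
    rw [hinter, measure_empty] at h1
    have h2 := (ENNReal.tendsto_toReal (by simp)).comp h1
    simpa [cdf', Function.comp_def] using h2
  obtain ⟨b, hb⟩ := (htop.eventually (eventually_gt_nhds hτ.2)).exists
  obtain ⟨a, ha⟩ := (hbot.eventually (eventually_lt_nhds hτ.1)).exists
  obtain ⟨x, _, hx⟩ := intermediate_value_uIcc (a := -(a:ℝ)) (b := (b:ℝ))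
    (hcont.continuousOn) (Set.mem_uIcc.mpr (Or.inl ⟨ha.le, hb.le⟩))
  exact ⟨x, hx⟩

lemma aux_copulaCov_eq (P : Measure Ω) (Y : ℤ → Ω → ℝ)
    (hFmono : StrictMono (cdf' P (Y 0))) (k : ℤ) (x₁ x₂ : ℝ) :
    copulaCov P Y k (cdf' P (Y 0) x₁) (cdf' P (Y 0) x₂) = laplaceCov P Y k x₁ x₂ := by
  unfold copulaCov laplaceCov
  have h1 : ind (fun ωo => cdf' P (Y 0) (Y k ωo)) (cdf' P (Y 0) x₁) = ind (Y k) x₁ := by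
    funext ω
    simp only [ind, hFmono.le_iff_le]
  have h2 : ind (fun ωo => cdf' P (Y 0) (Y 0 ωo)) (cdf' P (Y 0) x₂) = ind (Y 0) x₂ := by
    funext ω
    simp only [ind, hFmono.le_iff_le]
  rw [h1, h2]

lemma aux_copulaSpec_eq (P : Measure Ω) (Y : ℤ → Ω → ℝ)
    (hFmono : StrictMono (cdf' P (Y 0))) (x₁ x₂ ω : ℝ) :
    copulaSpec P Y (cdf' P (Y 0) x₁) (cdf' P (Y 0) x₂) ω = laplaceSpec P Y x₁ x₂ ω := by
  unfold copulaSpec laplaceSpec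
  congr 1
  apply tsum_congr
  intro k
  rw [aux_copulaCov_eq P Y hFmono k x₁ x₂]

end ConnLemmas


theorem statement1
    {Ω : Type} [MeasurableSpace Ω] (P : Measure Ω) [IsProbabilityMeasure P]
    (Y : ℤ → Ω → ℝ) (hYmeas : ∀ t, Measurable (Y t))
    (hstat : StrictlyStationary P Y)
    (hFcont : Continuous (cdf' P (Y 0)))
    (hFmono : StrictMono (cdf' P (Y 0)))
    (hsum : ∀ x₁ x₂ : ℝ, Summable fun k : ℤ => |laplaceCov P Y k x₁ x₂|) :
    ((∀ k : ℤ, P.map (fun ωo => (Y 0 ωo, Y k ωo)) = P.map (fun ωo => (Y 0 ωo, Y (-k) ωo)))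
        ↔ (∀ (ω x₁ x₂ : ℝ), (laplaceSpec P Y x₁ x₂ ω).im = 0)) ∧
    ((∀ (ω x₁ x₂ : ℝ), (laplaceSpec P Y x₁ x₂ ω).im = 0)
        ↔ (∀ (ω : ℝ) (τ₁ τ₂ : ℝ), τ₁ ∈ Set.Ioo (0:ℝ) 1 → τ₂ ∈ Set.Ioo (0:ℝ) 1 →
             (copulaSpec P Y τ₁ τ₂ ω).im = 0)) := by
  constructor
  · constructor
    · intro h ω x₁ x₂
      rw [aux_spec_im_zero_iff]
      exact aux_dir1 _ (hsum x₁ x₂)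
        (fun k => (aux_lawEq_iff P Y hYmeas hstat k).mp (h k) x₁ x₂) ω
    · intro h k
      refine (aux_lawEq_iff P Y hYmeas hstat k).mpr ?_
      intro x₁ x₂
      exact aux_dir2 _ (hsum x₁ x₂)
        (fun ω => (aux_spec_im_zero_iff P Y x₁ x₂ ω).mp (h ω x₁ x₂)) k
  · constructor
    · intro h ω τ₁ τ₂ h1 h2
      obtain ⟨x₁, hx₁⟩ := aux_exists_F_eq P (hYmeas 0) hFcont h1
      obtain ⟨x₂, hx₂⟩ := aux_exists_F_eq P (hYmeas 0) hFcont h2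
      rw [← hx₁, ← hx₂, aux_copulaSpec_eq P Y hFmono]
      exact h ω x₁ x₂
    · intro h ω x₁ x₂
      rw [← aux_copulaSpec_eq P Y hFmono x₁ x₂ ω]
      exact h ω _ _ (aux_F_mem_Ioo P hFmono x₁) (aux_F_mem_Ioo P hFmono x₂)
end
end

section
/- Let (Ω,𝒜,P) be a probability space, d ≥ 1, and λ > 0. For each n ∈ ℕ let F_n be a finite nonempty index set; for each ω ∈ F_n let Z_{n,ω}: Ω × ℝ^d → ℝ be a random function that is convex in its ℝ^d argument (measurable in the first), let ζ_{n,ω}: Ω → ℝ^d be random vectors and Q_{n,ω} symmetric positive-definite d×d (possibly random) matrices whose smallest eigenvalue is at least λ for all ω ∈ F_n and all n ≥ n₀. Set Z̄_{n,ω}(δ) := −δᵀζ_{n,ω} + (1/2) δᵀ Q_{n,ω} δ, with minimizer δ̃_{n,ω} := Q_{n,ω}^{−1} ζ_{n,ω}. Let a_n be positive reals with a_n → 0, and suppose that Δ_n := sup_{ω∈F_n} sup_{δ: ‖δ − δ̃_{n,ω}‖ ≤ a_n} |Z_{n,ω}(δ) − Z̄_{n,ω}(δ)| satisfies Δ_n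 / a_n² → 0 in probability. Then for any random vectors δ̂_{n,ω}: Ω → ℝ^d satisfying Z_{n,ω}(δ̂_{n,ω}) ≤ Z_{n,ω}(δ) for all δ ∈ ℝ^d (i.e., δ̂_{n,ω} minimizes Z_{n,ω}), one has sup_{ω∈F_n} ‖δ̂_{n,ω} − δ̃_{n,ω}‖ / a_n → 0 in probability. -/
open MeasureTheory Filter Topology

noncomputable section

lemma swap_sum {d : ℕ} (Q : Matrix (Fin d) (Fin d) ℝ) (hσ : Q.IsSymm)
    (x y : Fin d → ℝ) :
    ∑ i, ∑ j, x i * Q i j * y j = ∑ i, ∑ j, y i * Q i j * x j := by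
  rw [Finset.sum_comm]
  exact Finset.sum_congr rfl fun i _ => Finset.sum_congr rfl fun j _ => by
    rw [hσ.apply j i]; ring

lemma quad_identity {d : ℕ} (Q : Matrix (Fin d) (Fin d) ℝ) (hσ : Q.IsSymm)
    (x y : Fin d → ℝ) :
    (-(∑ i, x i * (Q.mulVec y) i) + (1/2) * ∑ i, ∑ j, x i * Q i j * x j)
      - (-(∑ i, y i * (Q.mulVec y) i) + (1/2) * ∑ i, ∑ j, y i * Q i j * y j)
    = (1/2) * ∑ i, ∑ j, (x i - y i) * Q i j * (x j - y j) := by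
  have lin : ∀ z : Fin d → ℝ, ∑ i, z i * (Q.mulVec y) i = ∑ i, ∑ j, z i * Q i j * y j := by
    intro z
    simp [Matrix.mulVec, dotProduct, Finset.mul_sum, mul_assoc]
  have expand : ∑ i, ∑ j, (x i - y i) * Q i j * (x j - y j)
      = ∑ i, ∑ j, x i * Q i j * x j - ∑ i, ∑ j, x i * Q i j * y j
        - ∑ i, ∑ j, y i * Q i j * x j + ∑ i, ∑ j, y i * Q i j * y j := by
    simp only [sub_mul, mul_sub, Finset.sum_sub_distrib]
    have := swap_sum Q hσ x y
    have := swap_sum Q hσ y x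
    linarith
  have hswap := swap_sum Q hσ x y
  rw [lin, lin, expand]
  linarith

lemma le_ciSup_mem {β : Type*} {f : β → ℝ} {s : Set β} (H : BddAbove (f '' s))
    {c : β} (hc : c ∈ s) (h0 : 0 ≤ f c) : f c ≤ ⨆ x ∈ s, f x := by
  have hne : Nonempty β := ⟨c⟩
  have hrange : BddAbove (Set.range fun x : s => f x) := by
    rwa [← Set.image_eq_range]
  have h1 : f c ≤ ⨆ x : s, f x := le_ciSup_set H hc
  have heq := ciSup_subtype_fun (s := s) hrange
    (by rw [Real.sSup_empty]; exact h0.trans h1)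
  rw [← heq]; exact h1

lemma arith_lemma {lam e A S : ℝ} (hlam : 0 < lam) (he : 0 < e) (hA : 0 < A)
    (h : lam / 2 * (e * A) ^ 2 ≤ 2 * S) : lam * e ^ 2 / 8 * A ^ 2 < S := by
  nlinarith [mul_pos (mul_pos hlam (pow_pos he 2)) (pow_pos hA 2)]

/-- Lemma A.1 (uniform convex-minimization comparison, generalizing Pollard's argument):
if the random convex objectives are uniformly close to quadratic comparison objectives on
balls of radius `a n` around the quadratic minimizers, at rate `o_P(a_n²)`, then the
minimizers are uniformly `o_P(a_n)`-close. -/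
theorem statement9
    {Ω : Type} [MeasurableSpace Ω] (P : Measure Ω) [IsProbabilityMeasure P]
    (d : ℕ) (hd : 1 ≤ d) (lam : ℝ) (hlam : 0 < lam) (n₀ : ℕ)
    (ι : ℕ → Type) [∀ n, Fintype (ι n)] [∀ n, Nonempty (ι n)]
    (Z : (n : ℕ) → ι n → Ω → EuclideanSpace ℝ (Fin d) → ℝ)
    (hZconv : ∀ (n : ℕ) (w : ι n) (ωo : Ω), ConvexOn ℝ Set.univ (Z n w ωo))
    (hZmeas : ∀ (n : ℕ) (w : ι n) (δ : EuclideanSpace ℝ (Fin d)),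
      Measurable fun ωo => Z n w ωo δ)
    (ζ : (n : ℕ) → ι n → Ω → EuclideanSpace ℝ (Fin d))
    (Q : (n : ℕ) → ι n → Ω → Matrix (Fin d) (Fin d) ℝ)
    (hQsym : ∀ (n : ℕ) (w : ι n) (ωo : Ω), (Q n w ωo).IsSymm)
    (hQeig : ∀ n ≥ n₀, ∀ (w : ι n) (ωo : Ω) (δ : EuclideanSpace ℝ (Fin d)),
      lam * ‖δ‖ ^ 2 ≤ ∑ i, ∑ j, δ i * Q n w ωo i j * δ j)
    -- the minimizer `δ̃ = Q⁻¹ ζ` of the quadratic comparison objective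
    (δt : (n : ℕ) → ι n → Ω → EuclideanSpace ℝ (Fin d))
    (hδt : ∀ (n : ℕ) (w : ι n) (ωo : Ω),
      (Q n w ωo).mulVec (δt n w ωo) = ζ n w ωo)
    (a : ℕ → ℝ) (ha : ∀ n, 0 < a n) (ha0 : Tendsto a atTop (nhds 0))
    -- `Δ_n / a_n² → 0` in probability, where `Z̄` is the quadratic comparison objective
    (hΔ : ∀ ε : ℝ, 0 < ε →
      Tendsto (fun n : ℕ =>
          P {ωo | ε * (a n) ^ 2 <
            ⨆ w : ι n, ⨆ δ ∈ Metric.closedBall (δt n w ωo) (a n),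
              |Z n w ωo δ -
                (-(∑ i, δ i * ζ n w ωo i)
                  + (1 / 2) * ∑ i, ∑ j, δ i * Q n w ωo i j * δ j)|})
        atTop (nhds 0))
    (δh : (n : ℕ) → ι n → Ω → EuclideanSpace ℝ (Fin d))
    (hδh : ∀ (n : ℕ) (w : ι n) (ωo : Ω) (δ : EuclideanSpace ℝ (Fin d)),
      Z n w ωo (δh n w ωo) ≤ Z n w ωo δ) :
    ∀ ε : ℝ, 0 < ε →
      Tendsto (fun n : ℕ =>
          P {ωo | ε * a n < ⨆ w : ι n, ‖δh n w ωo - δt n w ωo‖})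
        atTop (nhds 0) := by
  intro ε hε
  set ε₁ : ℝ := min ε 1 with hε₁def
  have hε₁ : 0 < ε₁ := lt_min hε one_pos
  have hε₁le : ε₁ ≤ 1 := min_le_right _ _
  have hε₁ε : ε₁ ≤ ε := min_le_left _ _
  set c : ℝ := lam * ε₁ ^ 2 / 8 with hcdef
  have hcpos : 0 < c := by positivity
  -- key deterministic inclusion
  have key : ∀ n ≥ n₀,
      {ωo | ε * a n < ⨆ w : ι n, ‖δh n w ωo - δt n w ωo‖} ⊆
      {ωo | c * (a n) ^ 2 <
        ⨆ w : ι n, ⨆ δ ∈ Metric.closedBall (δt n w ωo) (a n),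
          |Z n w ωo δ -
            (-(∑ i, δ i * ζ n w ωo i)
              + (1 / 2) * ∑ i, ∑ j, δ i * Q n w ωo i j * δ j)|} := by
    intro n hn ωo hωo
    simp only [Set.mem_setOf_eq] at hωo ⊢
    obtain ⟨w, hw⟩ := exists_lt_of_lt_ciSup hωo
    have hA : 0 < a n := ha n
    -- notation
    set A := a n
    set Zf : EuclideanSpace ℝ (Fin d) → ℝ := Z n w ωo with hZf
    set Qm : Matrix (Fin d) (Fin d) ℝ := Q n w ωo with hQm
    set dhat : EuclideanSpace ℝ (Fin d) := δh n w ωo with hdhat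
    set dtil : EuclideanSpace ℝ (Fin d) := δt n w ωo with hdtil
    set Zb : EuclideanSpace ℝ (Fin d) → ℝ := fun δ =>
      -(∑ i, δ i * ζ n w ωo i) + (1/2) * ∑ i, ∑ j, δ i * Qm i j * δ j with hZb
    have hw' : ε₁ * A < ‖dhat - dtil‖ :=
      lt_of_le_of_lt (mul_le_mul_of_nonneg_right hε₁ε hA.le) hw
    have hnorm_pos : 0 < ‖dhat - dtil‖ := lt_trans (by positivity) hw'
    set r : ℝ := ε₁ * A with hrdef
    have hr : 0 < r := by positivity
    have hrA : r ≤ A := by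
      calc r = ε₁ * A := rfl
        _ ≤ 1 * A := mul_le_mul_of_nonneg_right hε₁le hA.le
        _ = A := one_mul A
    set t : ℝ := r / ‖dhat - dtil‖ with htdef
    have ht0 : 0 < t := div_pos hr hnorm_pos
    have ht1 : t < 1 := (div_lt_one hnorm_pos).2 hw'
    set δs : EuclideanSpace ℝ (Fin d) := dtil + t • (dhat - dtil) with hδs
    have hcomb : δs = (1 - t) • dtil + t • dhat := by
      rw [hδs]; module
    -- convexity: Zf δs ≤ Zf dtil
    have hZs : Zf δs ≤ Zf dtil := by
      have hc := (hZconv n w ωo).2 (Set.mem_univ dtil) (Set.mem_univ dhat)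
        (by linarith : (0:ℝ) ≤ 1 - t) ht0.le (by ring)
      rw [← hcomb] at hc
      have hmin : Zf dhat ≤ Zf dtil := hδh n w ωo dtil
      have : (1 - t) • Zf dtil + t • Zf dhat ≤ Zf dtil := by
        simp only [smul_eq_mul]
        nlinarith
      exact le_trans hc this
    -- norm of δs - dtil
    have hsub : δs - dtil = t • (dhat - dtil) := by rw [hδs]; abel
    have hnorm : ‖δs - dtil‖ = r := by
      rw [hsub, norm_smul, Real.norm_eq_abs, abs_of_pos ht0, htdef,
        div_mul_cancel₀ _ (ne_of_gt hnorm_pos)]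
    -- quadratic gap
    have happly : ∀ i, (δs - dtil) i = δs i - dtil i := fun i => rfl
    have hquad : lam / 2 * r ^ 2 ≤ Zb δs - Zb dtil := by
      have hid := quad_identity Qm (hQsym n w ωo) (δs : Fin d → ℝ) (dtil : Fin d → ℝ)
      have hζ : (ζ n w ωo : Fin d → ℝ) = Qm.mulVec dtil := (hδt n w ωo).symm
      have hZbδ : ∀ δ : EuclideanSpace ℝ (Fin d),
          Zb δ = -(∑ i, δ i * (Qm.mulVec dtil) i) + (1/2) * ∑ i, ∑ j, δ i * Qm i j * δ j := by
        intro δ; rw [hZb]; simp only [hζ]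
      have heig : lam * r ^ 2 ≤ ∑ i, ∑ j, (δs i - dtil i) * Qm i j * (δs j - dtil j) := by
        have h := hQeig n hn w ωo (δs - dtil)
        rw [hnorm] at h
        exact h
      rw [hZbδ, hZbδ, hid]
      linarith
    -- continuity and boundedness of |Zf - Zb| on the ball
    have hZcont : Continuous Zf := by
      have := (hZconv n w ωo).continuousOn isOpen_univ
      rw [continuousOn_univ] at this
      exact this
    have hZbcont : Continuous Zb := by
      rw [hZb]
      have hproj : ∀ i : Fin d, Continuous fun δ : EuclideanSpace ℝ (Fin d) => δ i :=
        fun i => (EuclideanSpace.proj i).continuous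
      refine Continuous.add (Continuous.neg ?_) (Continuous.mul continuous_const ?_)
      · exact continuous_finset_sum _ fun i _ => (hproj i).mul continuous_const
      · exact continuous_finset_sum _ fun i _ => continuous_finset_sum _ fun j _ =>
          ((hproj i).mul continuous_const).mul (hproj j)
    have hBdd : BddAbove ((fun δ => |Zf δ - Zb δ|) '' Metric.closedBall dtil A) :=
      (isCompact_closedBall dtil A).bddAbove_image
        (((hZcont.sub hZbcont).abs).continuousOn)
    -- g w ≤ D
    have hgD : (⨆ δ ∈ Metric.closedBall dtil A, |Zf δ - Zb δ|) ≤
        ⨆ w' : ι n, ⨆ δ ∈ Metric.closedBall (δt n w' ωo) A,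
          |Z n w' ωo δ -
            (-(∑ i, δ i * ζ n w' ωo i)
              + (1/2) * ∑ i, ∑ j, δ i * Q n w' ωo i j * δ j)| := by
      apply le_ciSup (f := fun w' : ι n => ⨆ δ ∈ Metric.closedBall (δt n w' ωo) A,
        |Z n w' ωo δ -
          (-(∑ i, δ i * ζ n w' ωo i)
            + (1/2) * ∑ i, ∑ j, δ i * Q n w' ωo i j * δ j)|)
        (Set.Finite.bddAbove (Set.finite_range _)) w
    have hmem_s : δs ∈ Metric.closedBall dtil A := by
      rw [Metric.mem_closedBall, dist_eq_norm, hnorm]; exact hrA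
    have hmem_t : dtil ∈ Metric.closedBall dtil A := Metric.mem_closedBall_self hA.le
    have hFs : |Zf δs - Zb δs| ≤ ⨆ δ ∈ Metric.closedBall dtil A, |Zf δ - Zb δ| :=
      le_ciSup_mem hBdd hmem_s (abs_nonneg _)
    have hFt : |Zf dtil - Zb dtil| ≤ ⨆ δ ∈ Metric.closedBall dtil A, |Zf δ - Zb δ| :=
      le_ciSup_mem hBdd hmem_t (abs_nonneg _)
    -- combine
    have hgap : Zb δs - Zb dtil ≤ |Zf δs - Zb δs| + |Zf dtil - Zb dtil| := by
      have h1 : Zb δs - Zf δs ≤ |Zf δs - Zb δs| := by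
        rw [abs_sub_comm]; exact le_abs_self _
      have h2 : Zf dtil - Zb dtil ≤ |Zf dtil - Zb dtil| := le_abs_self _
      linarith
    have hfinal : lam / 2 * r ^ 2 ≤
        2 * ⨆ δ ∈ Metric.closedBall dtil A, |Zf δ - Zb δ| :=
      calc lam / 2 * r ^ 2 ≤ Zb δs - Zb dtil := hquad
        _ ≤ |Zf δs - Zb δs| + |Zf dtil - Zb dtil| := hgap
        _ ≤ (⨆ δ ∈ Metric.closedBall dtil A, |Zf δ - Zb δ|)
            + ⨆ δ ∈ Metric.closedBall dtil A, |Zf δ - Zb δ| := add_le_add hFs hFt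
        _ = 2 * ⨆ δ ∈ Metric.closedBall dtil A, |Zf δ - Zb δ| := by ring
    have hlt : c * A ^ 2 < ⨆ δ ∈ Metric.closedBall dtil A, |Zf δ - Zb δ| := by
      have h1 : lam / 2 * (ε₁ * A) ^ 2 ≤
          2 * ⨆ δ ∈ Metric.closedBall dtil A, |Zf δ - Zb δ| := by
        rw [← hrdef]; exact hfinal
      rw [hcdef]
      exact arith_lemma hlam hε₁ hA h1
    exact lt_of_lt_of_le hlt hgD
  -- squeeze
  refine tendsto_of_tendsto_of_tendsto_of_le_of_le' tendsto_const_nhds (hΔ c hcpos) ?_ ?_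
  · filter_upwards with n using zero_le
  · filter_upwards [eventually_ge_atTop n₀] with n hn
    exact measure_mono (key n hn)
end
end

section
/- Let a < b, c > 0 and L ≥ 0. Let g: [a,b] → ℝ be strictly increasing with |g(x) − g(y)| ≥ c|x − y| for all x, y ∈ [a,b], and let h: [a,b] → ℝ be nondecreasing with sup_{t ∈ [a,b]} |g(t) − h(t)| ≤ L. Denote by h^{−1}(p) := inf{ t ∈ [a,b] : h(t) ≥ p } the generalized inverse of h on [a,b], and by g^{−1} the (ordinary) inverse of g. If g(a) + 2L/c ≤ g(b) − 2L/c, then sup_{t ∈ [g(a)+2L/c,\ g(b)−2L/c]} | h^{−1}(t) − g^{−1}(t) | ≤ 2L/c. -/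
noncomputable section

/-- Generalized inverse of a nondecreasing function `h` on `[a, b]`
(with the convention `inf ∅ = b`). -/
def genInv (h : ℝ → ℝ) (a b : ℝ) (p : ℝ) : ℝ :=
  sInf ({t : ℝ | t ∈ Set.Icc a b ∧ p ≤ h t} ∪ {b})

/-- Lemma on generalized inverses: if `g` is strictly increasing (with modulus `c`) and
continuous on `[a,b]`, and `h` is nondecreasing and uniformly `L`-close to `g` on `[a,b]`,
then the (generalized) inverses are uniformly `2L/c`-close on
`[g(a) + 2L/c, g(b) − 2L/c]`. -/
theorem statement19
    (a b c L : ℝ) (hab : a < b) (hc : 0 < c) (hL : 0 ≤ L)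
    (g h : ℝ → ℝ)
    (hg : StrictMonoOn g (Set.Icc a b))
    (hgcont : ContinuousOn g (Set.Icc a b))
    (hglip : ∀ x ∈ Set.Icc a b, ∀ y ∈ Set.Icc a b, c * |x - y| ≤ |g x - g y|)
    (hh : MonotoneOn h (Set.Icc a b))
    (hclose : ∀ t ∈ Set.Icc a b, |g t - h t| ≤ L)
    (hwindow : g a + 2 * L / c ≤ g b - 2 * L / c) :
    ∀ t ∈ Set.Icc (g a + 2 * L / c) (g b - 2 * L / c),
      |genInv h a b t - genInv g a b t| ≤ 2 * L / c := by
  intro t ht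
  set ε := 2 * L / c with hεdef
  have hε0 : 0 ≤ ε := by positivity
  have hcε : c * ε = 2 * L := by rw [hεdef]; field_simp
  obtain ⟨ht1, ht2⟩ := ht
  have hta : g a ≤ t := by linarith
  have htb : t ≤ g b := by linarith
  obtain ⟨x, hx, hgx⟩ := intermediate_value_Icc hab.le hgcont ⟨hta, htb⟩
  have hbdd : ∀ (f : ℝ → ℝ), BddBelow ({s : ℝ | s ∈ Set.Icc a b ∧ t ≤ f s} ∪ {b}) := by
    intro f
    refine ⟨a, fun s hs => ?_⟩
    rcases hs with ⟨⟨hs1, _⟩, _⟩ | hs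
    · exact hs1
    · simp only [Set.mem_singleton_iff] at hs; linarith [hab.le]
  -- genInv g t = x
  have hSg : genInv g a b t = x := by
    unfold genInv
    apply le_antisymm
    · exact csInf_le (hbdd g) (Or.inl ⟨hx, hgx.ge⟩)
    · apply le_csInf ⟨b, Or.inr rfl⟩
      rintro s (⟨hs, hts⟩ | rfl)
      · by_contra hlt
        push_neg at hlt
        have := hg hs hx hlt
        rw [hgx] at this
        linarith
      · exact hx.2
  rw [hSg, abs_sub_le_iff]
  constructor
  · -- genInv h t ≤ x + ε
    have hub : genInv h a b t ≤ x + ε := by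
      by_cases hcase : x + ε ≤ b
      · have hmem : x + ε ∈ Set.Icc a b := ⟨by linarith [hx.1], hcase⟩
        have hgl := hglip (x + ε) hmem x hx
        have hmono : g x ≤ g (x + ε) := hg.monotoneOn hx hmem (by linarith)
        rw [abs_of_nonneg (by linarith : (0:ℝ) ≤ x + ε - x),
            abs_of_nonneg (by linarith : (0:ℝ) ≤ g (x + ε) - g x)] at hgl
        have hcl := hclose (x + ε) hmem
        rw [abs_sub_le_iff] at hcl
        have : t ≤ h (x + ε) := by
          have h2 : c * ε ≤ g (x + ε) - g x := by nlinarith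
          rw [hgx] at h2
          linarith [hcl.1]
        exact csInf_le (hbdd h) (Or.inl ⟨hmem, this⟩)
      · have : genInv h a b t ≤ b := csInf_le (hbdd h) (Or.inr rfl)
        linarith
    linarith
  · -- x - ε ≤ genInv h t
    have hlb : x - ε ≤ genInv h a b t := by
      apply le_csInf ⟨b, Or.inr rfl⟩
      rintro s (⟨hs, hts⟩ | rfl)
      · by_contra hlt
        push_neg at hlt
        have hsx : s < x := by linarith
        have hgl := hglip x hx s hs
        have hmono : g s ≤ g x := (hg hs hx hsx).le
        rw [abs_of_nonneg (by linarith : (0:ℝ) ≤ x - s),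
            abs_of_nonneg (by linarith : (0:ℝ) ≤ g x - g s)] at hgl
        have hcl := hclose s hs
        rw [abs_sub_le_iff] at hcl
        have h1 : c * ε < c * (x - s) := by
          exact mul_lt_mul_of_pos_left (by linarith) hc
        rw [hgx] at hgl
        -- g s ≤ t - c*(x-s) < t - 2L, so h s ≤ g s + L < t - L ≤ t
        have : h s < t := by nlinarith [hcl.2]
        linarith
      · linarith [hx.2]
    linarith
end
end
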